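/- Let f : ℝ^d → ℝ be convex and w : ℝ^d → ℝ convex differentiable, η > 0, and suppose θ⁺ = argmin_θ [f(θ) + (1/(2η)) D_w(θ, θ₀)]. Then for all θ: f(θ⁺) + (1/(2η)) D_w(θ, θ⁺) ≤ f(θ) + (1/(2η)) D_w(θ, θ₀) - (1/(2η)) D_w(θ⁺, θ₀). -/

import Mathlib

open scoped RealInnerProductSpace

/-- Three-point lemma for an exact Bregman proximal step. -/
theorem bregman_three_point_lemma {d : ℕ}
    (f w : EuclideanSpace ℝ (Fin d) → ℝ)
    (gw : EuclideanSpace ℝ (Fin d) → EuclideanSpace ℝ (Fin d))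
    (η : ℝ) (hη : 0 < η)
    (hf : ConvexOn ℝ Set.univ f)
    (hw : ConvexOn ℝ Set.univ w)
    (hw_diff : ∀ x, HasGradientAt w (gw x) x)
    (D : EuclideanSpace ℝ (Fin d) → EuclideanSpace ℝ (Fin d) → ℝ)
    (hD : ∀ x y, D x y = w x - w y - ⟪gw y, x - y⟫)
    (θ₀ θp : EuclideanSpace ℝ (Fin d))
    (hmin : ∀ θ, f θp + 1/(2*η) * D θp θ₀ ≤ f θ + 1/(2*η) * D θ θ₀) :
    ∀ θ, f θp + 1/(2*η) * D θ θp
      ≤ f θ + 1/(2*η) * D θ θ₀ - 1/(2*η) * D θp θ₀ := by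
  intro θ
  set c : ℝ := 1/(2*η) with hc
  have hcpos : 0 < c := by positivity
  set v : EuclideanSpace ℝ (Fin d) := θ - θp with hv
  set g : ℝ → ℝ := fun t => w (θp + t • v) with hg
  -- derivative of g at 0
  have hline : HasDerivAt (fun t : ℝ => θp + t • v) v 0 := by
    simpa using ((hasDerivAt_id (0:ℝ)).smul_const v).const_add θp
  have hgrad : HasDerivAt g ⟪gw θp, v⟫ 0 := by
    have hfd : HasFDerivAt w ((InnerProductSpace.toDual ℝ _) (gw θp)) θp :=
      (hasGradientAt_iff_hasFDerivAt.mp (hw_diff θp))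
    have : HasFDerivAt w ((InnerProductSpace.toDual ℝ _) (gw θp)) (θp + (0:ℝ) • v) := by
      simpa using hfd
    exact (by simpa [InnerProductSpace.toDual_apply_apply] using this.comp_hasDerivAt 0 hline :
      HasDerivAt (w ∘ fun t : ℝ => θp + t • v) ⟪gw θp, v⟫ 0)
  have hslope : Filter.Tendsto (fun t => c * slope g 0 t - c * ⟪gw θ₀, v⟫) (nhdsWithin 0 (Set.Ioi 0))
      (nhds (c * ⟪gw θp, v⟫ - c * ⟪gw θ₀, v⟫)) := by
    have h1 := (hasDerivAt_iff_tendsto_slope.mp hgrad).mono_left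
      (nhdsWithin_mono 0 (fun x hx => ne_of_gt hx))
    exact (h1.const_mul c).sub_const _
  have key : f θp - f θ ≤ c * ⟪gw θp, v⟫ - c * ⟪gw θ₀, v⟫ := by
    refine ge_of_tendsto hslope ?_
    filter_upwards [Ioc_mem_nhdsGT_of_mem (Set.left_mem_Ico.mpr one_pos)] with t ht
    obtain ⟨ht0, ht1⟩ := ht
    have hcomb : (1 - t) • θp + t • θ = θp + t • v := by
      rw [hv]; module
    have hconv : f (θp + t • v) ≤ (1 - t) * f θp + t * f θ := by
      have := hf.2 (Set.mem_univ θp) (Set.mem_univ θ) (by linarith : (0:ℝ) ≤ 1 - t)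
        (le_of_lt ht0) (by ring)
      rw [hcomb] at this
      simpa [smul_eq_mul] using this
    have hIn : ⟪gw θ₀, θp + t • v - θ₀⟫ = ⟪gw θ₀, θp - θ₀⟫ + t * ⟪gw θ₀, v⟫ := by
      have h2 : θp + t • v - θ₀ = (θp - θ₀) + t • v := by abel
      rw [h2, inner_add_right, real_inner_smul_right]
    have hm := hmin (θp + t • v)
    rw [hD, hD] at hm
    have hmain : t * (f θp - f θ) ≤ c * (w (θp + t • v) - w θp) - c * (t * ⟪gw θ₀, v⟫) := by
      rw [hIn] at hm
      nlinarith [hm, hconv]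
    have hs : slope g 0 t = (w (θp + t • v) - w θp) / t := by
      rw [slope_def_field]
      simp [hg]
    rw [hs, mul_div_assoc']
    have hdiv : f θp - f θ + c * ⟪gw θ₀, v⟫ ≤ c * (w (θp + t • v) - w θp) / t :=
      (le_div_iff₀ ht0).mpr (by nlinarith [hmain])
    linarith
  -- final algebra
  rw [hD, hD, hD]
  have h3 : ⟪gw θ₀, θ - θ₀⟫ - ⟪gw θ₀, θp - θ₀⟫ = ⟪gw θ₀, v⟫ := by
    rw [← inner_sub_right]
    congr 1
    rw [hv]; abel
  have h4 : ⟪gw θp, θ - θp⟫ = ⟪gw θp, v⟫ := by rw [hv]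
  rw [h4]
  have h3c : c * ⟪gw θ₀, θ - θ₀⟫ - c * ⟪gw θ₀, θp - θ₀⟫ = c * ⟪gw θ₀, v⟫ := by
    rw [← mul_sub, h3]
  linarith [key, h3c]
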